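/- Let M and N be 2-parameter rectangle persistence modules with underlying open rectangles R_M = (a₁,b₁)×(a₂,b₂) and R_N = (c₁,d₁)×(c₂,d₂). Then there exists a non-trivial (nonzero) morphism f: M → N if and only if c ≤ a < d ≤ b, where a=(a₁,a₂), b=(b₁,b₂), c=(c₁,c₂), d=(d₁,d₂), ≤ is the coordinatewise order and < is the strict coordinatewise order. -/

import Mathlib

open Classical

noncomputable section

/-- A point of the parameter space `ℝⁿ`. -/
abbrev Pt (n : ℕ) := Fin n → ℝ

/-- Shift of a point by the diagonal vector `(ε, …, ε)`. -/
def shiftPt {n : ℕ} (u : Pt n) (ε : ℝ) : Pt n := fun i => u i + ε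

lemma shiftPt_mono {n : ℕ} {u v : Pt n} (ε : ℝ) (h : u ≤ v) :
    shiftPt u ε ≤ shiftPt v ε := fun i => add_le_add (h i) (le_refl ε)

lemma le_shiftPt {n : ℕ} (u : Pt n) {ε : ℝ} (hε : 0 ≤ ε) : u ≤ shiftPt u ε :=
  fun i => le_add_of_nonneg_right hε

/-- An `n`-parameter persistence module over the field `k`. -/
structure PersMod (k : Type) [Field k] (n : ℕ) where
  obj : Pt n → Type
  [acg : ∀ u, AddCommGroup (obj u)]
  [mod : ∀ u, Module k (obj u)]
  map : ∀ {u v : Pt n}, u ≤ v → (obj u →ₗ[k] obj v)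
  map_id : ∀ u : Pt n, map (le_refl u) = LinearMap.id
  map_comp : ∀ {u v w : Pt n} (h1 : u ≤ v) (h2 : v ≤ w),
    (map h2).comp (map h1) = map (h1.trans h2)

attribute [instance] PersMod.acg PersMod.mod

variable {k : Type} [Field k] {n : ℕ}

/-- A morphism of persistence modules. -/
structure PersHom (M N : PersMod k n) where
  app : ∀ u, M.obj u →ₗ[k] N.obj u
  natural : ∀ {u v : Pt n} (h : u ≤ v),
    (app v).comp (M.map h) = (N.map h).comp (app u)

/-- A morphism is trivial when every component is the zero map. -/
def PersHom.Trivial {M N : PersMod k n} (f : PersHom M N) : Prop := ∀ u, f.app u = 0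

/-- The `ε`-shift of a persistence module. -/
def PersMod.shift (M : PersMod k n) (ε : ℝ) : PersMod k n where
  obj u := M.obj (shiftPt u ε)
  map h := M.map (shiftPt_mono ε h)
  map_id u := M.map_id _
  map_comp h1 h2 := M.map_comp _ _

/-- `(f, g)` is an `ε`-interleaving pair between `M` and `N`. -/
def IsInterleavingPair (M N : PersMod k n) (ε : ℝ) (hε : 0 ≤ ε)
    (f : PersHom M (N.shift ε)) (g : PersHom N (M.shift ε)) : Prop :=
  (∀ u : Pt n, (g.app (shiftPt u ε)).comp (f.app u) =
      M.map ((le_shiftPt u hε).trans (le_shiftPt _ hε))) ∧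
  (∀ u : Pt n, (f.app (shiftPt u ε)).comp (g.app u) =
      N.map ((le_shiftPt u hε).trans (le_shiftPt _ hε)))

/-- `M` and `N` are `ε`-interleaved. -/
def Interleaved (M N : PersMod k n) (ε : ℝ) : Prop :=
  ∃ (hε : 0 ≤ ε) (f : PersHom M (N.shift ε)) (g : PersHom N (M.shift ε)),
    IsInterleavingPair M N ε hε f g

/-- The interleaving distance, with value in the extended reals. -/
def interleavingDist (M N : PersMod k n) : EReal :=
  sInf {x : EReal | ∃ ε : ℝ, Interleaved M N ε ∧ x = (ε : EReal)}

/-- `M` is `ε`-trivial : all transition maps `M_u → M_{u+(ε,…,ε)}` vanish. -/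
def EpsTrivial (M : PersMod k n) (ε : ℝ) : Prop :=
  ∀ (u : Pt n) (h : u ≤ shiftPt u ε), M.map h = 0

/-- The zero persistence module. -/
def ZeroMod (k : Type) [Field k] (n : ℕ) : PersMod k n where
  obj _ := PUnit
  map _ := 0
  map_id _ := by apply LinearMap.ext; intro x; exact Subsingleton.elim _ _
  map_comp _ _ := by apply LinearMap.ext; intro x; exact Subsingleton.elim _ _

/-- The space at `u` of the interval module on `I` : all of `k` if `u ∈ I`, `0` otherwise. -/
def segSpace (k : Type) [Field k] {n : ℕ} (I : Set (Pt n)) (u : Pt n) : Submodule k k where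
  carrier := {x | u ∉ I → x = 0}
  add_mem' := by intro x y hx hy h; simp only [Set.mem_setOf_eq] at *; rw [hx h, hy h, add_zero]
  zero_mem' := fun _ => rfl
  smul_mem' := by intro c x hx h; simp only [Set.mem_setOf_eq] at *; rw [hx h, smul_zero]

/-- The interval persistence module on an order-convex set `I` : `k` on `I` with identity
internal transition maps, `0` elsewhere. -/
def IntervalMod (k : Type) [Field k] {n : ℕ} (I : Set (Pt n)) (hI : I.OrdConnected) :
    PersMod k n where
  obj u := segSpace k I u
  map {u v} h :=
    { toFun := fun x => ⟨if v ∈ I then (x : k) else 0, by intro hv; simp [hv]⟩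
      map_add' := by intro x y; apply Subtype.ext; by_cases hv : v ∈ I <;> simp [hv]
      map_smul' := by intro c x; apply Subtype.ext; by_cases hv : v ∈ I <;> simp [hv] }
  map_id u := by
    apply LinearMap.ext; intro x
    apply Subtype.ext
    by_cases hu : u ∈ I
    · simp [hu]
    · simp [hu, x.2 hu]
  map_comp {u v w} h1 h2 := by
    apply LinearMap.ext; intro x
    apply Subtype.ext
    by_cases hw : w ∈ I
    · by_cases hv : v ∈ I
      · simp [hw, hv]
      · by_cases hu : u ∈ I
        · exact absurd (hI.out hu hw ⟨h1, h2⟩) hv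
        · simp [hw, hv, x.2 hu]
    · simp [hw]

/-- The open box `∏ᵢ (aᵢ, bᵢ)` with extended-real endpoints. -/
def box {n : ℕ} (a b : Fin n → EReal) : Set (Pt n) :=
  {u | ∀ i, a i < (u i : EReal) ∧ (u i : EReal) < b i}

lemma box_ordConnected {n : ℕ} (a b : Fin n → EReal) : (box a b).OrdConnected := by
  constructor
  intro u hu w hw v hv i
  exact ⟨lt_of_lt_of_le (hu i).1 (by exact_mod_cast hv.1 i),
    lt_of_le_of_lt (by exact_mod_cast hv.2 i) (hw i).2⟩

/-- The rectangle persistence module with underlying open rectangle `∏ᵢ (aᵢ, bᵢ)`. -/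
def RectMod (k : Type) [Field k] {n : ℕ} (a b : Fin n → EReal) : PersMod k n :=
  IntervalMod k (box a b) (box_ordConnected a b)

/-- Subtraction of extended reals with the conventions `(±∞) − (±∞) = 0`. -/
def esub (x y : EReal) : EReal :=
  if (x = ⊤ ∧ y = ⊤) ∨ (x = ⊥ ∧ y = ⊥) then 0 else x - y

/-- Absolute value on the extended reals (`|±∞| = +∞`). -/
def eabs (x : EReal) : EReal := max x (-x)

/-- The `ℓ^∞`-distance `‖x − y‖_∞` on extended `ℝⁿ`. -/
def supDist {n : ℕ} (x y : Fin n → EReal) : EReal := ⨆ i, eabs (esub (x i) (y i))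

/-- The closed formula for the interleaving distance between the rectangle modules with
rectangles `∏ (aᵢ, bᵢ)` and `∏ (cᵢ, dᵢ)`. -/
def dIFormula {n : ℕ} (a b c d : Fin n → EReal) : EReal :=
  min (max (⨅ i, esub (b i) (a i) / 2) (⨅ i, esub (d i) (c i) / 2))
      (max (supDist c a) (supDist d b))

/-- `M` and `N` are isomorphic persistence modules. -/
def PersIso (M N : PersMod k n) : Prop :=
  ∃ f : PersHom M N, ∀ u, Function.Bijective (f.app u)

/-- `M` is a non-zero persistence module. -/
def PersMod.Nonzero (M : PersMod k n) : Prop := ∃ (u : Pt n) (x : M.obj u), x ≠ 0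

/-- Direct sum of two persistence modules. -/
def dirSum (M N : PersMod k n) : PersMod k n where
  obj u := M.obj u × N.obj u
  map h := (M.map h).prodMap (N.map h)
  map_id u := by
    apply LinearMap.ext; intro x
    show ((M.map (le_refl u)) x.1, (N.map (le_refl u)) x.2) = x
    rw [M.map_id, N.map_id]; rfl
  map_comp h1 h2 := by
    apply LinearMap.ext; intro x
    show ((M.map _) ((M.map _) x.1), (N.map _) ((N.map _) x.2))
      = ((M.map _) x.1, (N.map _) x.2)
    have hM : (M.map h2) ((M.map h1) x.1) = (M.map (h1.trans h2)) x.1 := by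
      rw [← M.map_comp h1 h2]; rfl
    have hN : (N.map h2) ((N.map h1) x.2) = (N.map (h1.trans h2)) x.2 := by
      rw [← N.map_comp h1 h2]; rfl
    rw [hM, hN]

/-- Zigzag-connectedness of a subset of `ℝⁿ`. -/
def ZigzagConnected {n : ℕ} (I : Set (Pt n)) : Prop :=
  ∀ u ∈ I, ∀ v ∈ I,
    Relation.ReflTransGen (fun x y => x ∈ I ∧ y ∈ I ∧ (x ≤ y ∨ y ≤ x)) u v

/-- `I` is an interval in `ℝⁿ`: nonempty, order-convex and zigzag-connected. -/
def IsInterval {n : ℕ} (I : Set (Pt n)) : Prop :=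
  I.Nonempty ∧ I.OrdConnected ∧ ZigzagConnected I

/-- A partial multibijection `Fin m ⇸ Fin k'`, encoded by an `Option`-valued map that is
injective on matched indices. -/
def PartialInj {m k' : ℕ} (σ : Fin m → Option (Fin k')) : Prop :=
  ∀ i j l, σ i = some l → σ j = some l → i = j

/-- `σ` is an `ε`-matching between the barcodes `A` and `B` (families of intervals). -/
def IsEpsMatching (k : Type) [Field k] {n m k' : ℕ}
    (A : Fin m → Set (Pt n)) (hA : ∀ i, (A i).OrdConnected)
    (B : Fin k' → Set (Pt n)) (hB : ∀ j, (B j).OrdConnected)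
    (σ : Fin m → Option (Fin k')) (ε : ℝ) : Prop :=
  PartialInj σ ∧
  (∀ i, σ i = none → EpsTrivial (IntervalMod k (A i) (hA i)) (2 * ε)) ∧
  (∀ j, (∀ i, σ i ≠ some j) → EpsTrivial (IntervalMod k (B j) (hB j)) (2 * ε)) ∧
  (∀ i j, σ i = some j →
    Interleaved (IntervalMod k (A i) (hA i)) (IntervalMod k (B j) (hB j)) ε)

/-- The bottleneck distance between the interval decomposable modules with barcodes
`A` and `B`. -/
def bottleneckDist (k : Type) [Field k] {n m k' : ℕ}
    (A : Fin m → Set (Pt n)) (hA : ∀ i, (A i).OrdConnected)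
    (B : Fin k' → Set (Pt n)) (hB : ∀ j, (B j).OrdConnected) : EReal :=
  sInf {x : EReal | ∃ (ε : ℝ) (σ : Fin m → Option (Fin k')),
    0 ≤ ε ∧ IsEpsMatching k A hA B hB σ ε ∧ x = (ε : EReal)}

lemma rectMod_map_val (a b : Fin n → EReal) {u v : Pt n} (h : u ≤ v)
    (x : (RectMod k a b).obj u) :
    ((RectMod k a b).map h x).val = if v ∈ box a b then x.val else 0 := rfl

lemma rect_key {n : ℕ} {a b c d : Fin n → EReal} (hca : ∀ i, c i ≤ a i) (hdb : ∀ i, d i ≤ b i)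
    {u v : Pt n} (h : u ≤ v) (huA : u ∈ box a b) (hvC : v ∈ box c d) :
    v ∈ box a b ∧ u ∈ box c d := by
  constructor <;> intro i
  · exact ⟨(huA i).1.trans_le (EReal.coe_le_coe_iff.2 (h i)), (hvC i).2.trans_le (hdb i)⟩
  · exact ⟨(hca i).trans_lt (huA i).1,
      lt_of_le_of_lt (EReal.coe_le_coe_iff.2 (h i)) (hvC i).2⟩

/-- The component at `u` of the canonical morphism between rectangle modules. -/
def rectHomApp (a b c d : Fin n → EReal) (u : Pt n) :
    segSpace k (box a b) u →ₗ[k] segSpace k (box c d) u where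
  toFun := fun x => ⟨if u ∈ box a b ∧ u ∈ box c d then (x : k) else 0, by
    intro hu; rw [if_neg]; rintro ⟨_, h2⟩; exact hu h2⟩
  map_add' := by
    intro x y; apply Subtype.ext
    by_cases h : u ∈ box a b ∧ u ∈ box c d <;> simp [h]
  map_smul' := by
    intro r x; apply Subtype.ext
    by_cases h : u ∈ box a b ∧ u ∈ box c d <;> simp [h]

lemma rectHomApp_val (a b c d : Fin n → EReal) (u : Pt n) (x : segSpace k (box a b) u) :
    (rectHomApp a b c d u x).val = if u ∈ box a b ∧ u ∈ box c d then x.val else 0 := rfl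

/-- The canonical morphism between rectangle modules when `c ≤ a` and `d ≤ b`. -/
def rectHom (a b c d : Fin n → EReal) (hca : ∀ i, c i ≤ a i) (hdb : ∀ i, d i ≤ b i) :
    PersHom (RectMod k a b) (RectMod k c d) where
  app u := rectHomApp a b c d u
  natural := by
    intro u v h
    apply LinearMap.ext; intro x
    apply Subtype.ext
    show (rectHomApp a b c d v ((RectMod k a b).map h x)).val
      = ((RectMod k c d).map h (rectHomApp a b c d u x)).val
    show (if v ∈ box a b ∧ v ∈ box c d then (if v ∈ box a b then x.val else 0) else 0)
      = (if v ∈ box c d then (if u ∈ box a b ∧ u ∈ box c d then x.val else 0) else 0)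
    by_cases hvC : v ∈ box c d
    · by_cases huA : u ∈ box a b
      · obtain ⟨hvA, huC⟩ := rect_key hca hdb h huA hvC
        simp [hvA, hvC, huA, huC]
      · simp [hvC, huA, x.2 huA]
    · simp [hvC]

theorem exists_nontrivial_morphism_iff (a b c d : Fin 2 → EReal)
    (ha : ∀ i, a i ≠ ⊤) (hb : ∀ i, b i ≠ ⊥)
    (hc : ∀ i, c i ≠ ⊤) (hd : ∀ i, d i ≠ ⊥) (hab : ∀ i, a i < b i) (hcd : ∀ i, c i < d i) :
    (∃ f : PersHom (RectMod k a b) (RectMod k c d), ¬ f.Trivial) ↔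
      ((∀ i, c i ≤ a i) ∧ (∀ i, a i < d i) ∧ (∀ i, d i ≤ b i)) := by
  constructor
  · rintro ⟨f, hf⟩
    rw [PersHom.Trivial] at hf; push_neg at hf
    obtain ⟨u, hu⟩ := hf
    obtain ⟨x, hx⟩ : ∃ x, f.app u x ≠ 0 := by
      by_contra h; push_neg at h; exact hu (LinearMap.ext h)
    have hxne : x ≠ 0 := fun h => hx (by rw [h, map_zero])
    have huA : u ∈ box a b := by
      by_contra h; exact hxne (Subtype.ext (x.2 h))
    have huC : u ∈ box c d := by
      by_contra h; exact hx (Subtype.ext ((f.app u x).2 h))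
    refine ⟨?_, fun i => (huA i).1.trans (huC i).2, ?_⟩
    · -- c ≤ a
      by_contra hcon; push_neg at hcon
      obtain ⟨i, hi⟩ := hcon
      have hcne_bot : c i ≠ ⊥ := fun h => absurd (h ▸ hi) (by simp)
      have hcr : ((c i).toReal : EReal) = c i := EReal.coe_toReal (hc i) hcne_bot
      set w : Pt 2 := Function.update u i ((c i).toReal) with hw
      have hwu : w ≤ u := by
        intro j
        rcases eq_or_ne j i with rfl | hj
        · simp only [hw, Function.update_self]
          have : ((c j).toReal : EReal) < (u j : EReal) := hcr ▸ (huC j).1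
          exact (EReal.coe_le_coe_iff.1 this.le)
        · simp [hw, Function.update_of_ne hj]
      have hwA : w ∈ box a b := by
        intro j
        rcases eq_or_ne j i with rfl | hj
        · simp only [hw, Function.update_self]
          rw [hcr]
          exact ⟨hi, (huC j).1.trans (huA j).2⟩
        · simpa [hw, Function.update_of_ne hj] using huA j
      have hwC : w ∉ box c d := by
        intro hcon2
        have := (hcon2 i).1
        simp only [hw, Function.update_self] at this
        rw [hcr] at this
        exact lt_irrefl _ this
      set x' : (RectMod k a b).obj w := ⟨x.val, fun h => absurd hwA h⟩ with hx'
      have hmap : (RectMod k a b).map hwu x' = x := by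
        apply Subtype.ext
        rw [rectMod_map_val]
        simp [huA, hx']
      have hnat := f.natural hwu
      have := congrArg (fun g => g x') hnat
      simp only [LinearMap.comp_apply] at this
      rw [hmap] at this
      have hz : f.app w x' = 0 := Subtype.ext ((f.app w x').2 hwC)
      rw [hz, map_zero] at this
      exact hx this
    · -- d ≤ b
      by_contra hcon; push_neg at hcon
      obtain ⟨i, hi⟩ := hcon
      have hbne_top : b i ≠ ⊤ := fun h => absurd (h ▸ hi) (by simp)
      have hbr : ((b i).toReal : EReal) = b i := EReal.coe_toReal hbne_top (hb i)
      set v : Pt 2 := Function.update u i ((b i).toReal) with hv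
      have huv : u ≤ v := by
        intro j
        rcases eq_or_ne j i with rfl | hj
        · simp only [hv, Function.update_self]
          have : (u j : EReal) < ((b j).toReal : EReal) := hbr ▸ (huA j).2
          exact (EReal.coe_le_coe_iff.1 this.le)
        · simp [hv, Function.update_of_ne hj]
      have hvC : v ∈ box c d := by
        intro j
        rcases eq_or_ne j i with rfl | hj
        · simp only [hv, Function.update_self]
          rw [hbr]
          exact ⟨(huC j).1.trans (huA j).2, hi⟩
        · simpa [hv, Function.update_of_ne hj] using huC j
      have hvA : v ∉ box a b := by
        intro hcon2
        have := (hcon2 i).2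
        simp only [hv, Function.update_self] at this
        rw [hbr] at this
        exact lt_irrefl _ this
      have hnat := f.natural huv
      have := congrArg (fun g => g x) hnat
      simp only [LinearMap.comp_apply] at this
      have hz : (RectMod k a b).map huv x = 0 :=
        Subtype.ext (((RectMod k a b).map huv x).2 hvA)
      rw [hz, map_zero] at this
      have hval : ((RectMod k c d).map huv (f.app u x)).val = (f.app u x).val := by
        rw [rectMod_map_val]; simp [hvC]
      rw [← this] at hval
      exact hx (Subtype.ext hval.symm)
  · rintro ⟨hca, had, hdb⟩
    refine ⟨rectHom a b c d hca hdb, ?_⟩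
    intro htriv
    choose t ht1 ht2 using fun i => EReal.exists_between_coe_real (had i)
    set u : Pt 2 := t with hu
    have huA : u ∈ box a b := fun i => ⟨ht1 i, (ht2 i).trans_le (hdb i)⟩
    have huC : u ∈ box c d := fun i => ⟨(hca i).trans_lt (ht1 i), ht2 i⟩
    have hx : ((rectHom a b c d hca hdb).app u
        ⟨(1 : k), fun h => absurd huA h⟩).val = 1 := by
      show (if u ∈ box a b ∧ u ∈ box c d then (1 : k) else 0) = 1
      simp [huA, huC]
    rw [htriv u] at hx
    change (0 : k) = 1 at hx
    exact zero_ne_one hx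

end
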